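/- Let (Ω, ℱ, μ) be a probability space, let n ≥ 1, let G : Ω → ℝⁿ be a square-integrable random vector whose covariance matrix Σ_G satisfies uᵀ Σ_G u ≥ μ₀·‖u‖² for all u ∈ ℝⁿ with μ₀ ≥ 0, let v ∈ ℝⁿ be a deterministic vector, let Y_β be a square-integrable real random variable, let γ ≥ 0, and set Y = Y_β + γ·⟨G, v⟩. If γ·√(μ₀)·‖v‖ ≥ √(Var(Y_β)), then for every constant c ∈ ℝ, E[(c − Y)²] ≥ (γ·√(μ₀)·‖v‖ − √(Var(Y_β)))². -/

import Mathlib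

open MeasureTheory
open scoped RealInnerProductSpace

lemma mul_integrable' {Ω : Type*} {mΩ : MeasurableSpace Ω} {μ : Measure Ω}
    [IsFiniteMeasure μ] {f g : Ω → ℝ} (hf : MemLp f 2 μ) (hg : MemLp g 2 μ) :
    Integrable (fun ω => f ω * g ω) μ := by
  have h : MemLp (f • g) 1 μ :=
    hg.smul hf (hpqr := ⟨by simp only [one_div, ENNReal.inv_two_add_inv_two, inv_one]⟩)
  exact h.integrable le_rfl

lemma norm_Lp_sq {Ω : Type*} {mΩ : MeasurableSpace Ω} {μ : Measure Ω}
    (f : Lp ℝ 2 μ) : ‖f‖ ^ 2 = ∫ ω, (f : Ω → ℝ) ω ^ 2 ∂μ := by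
  have h1 : ⟪f, f⟫ = ∫ ω, (f : Ω → ℝ) ω * (f : Ω → ℝ) ω ∂μ := L2.inner_def _ _
  rw [← real_inner_self_eq_norm_sq, h1]
  exact integral_congr_ae (Filter.Eventually.of_forall fun ω => (sq _).symm)

/-- Single-transition form of the instability theorem: with the critic target
`Y = Y_β + γ·⟪G, v⟫`, where the covariance of the random gradient `G` satisfies
`uᵀ Σ_G u ≥ μ₀·‖u‖²`, if `γ·√μ₀·‖v‖ ≥ √(Var Y_β)`, then for every constant `c`,
`E[(c − Y)²] ≥ (γ·√μ₀·‖v‖ − √(Var Y_β))²`. -/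
theorem stmt_13 {Ω : Type*} {mΩ : MeasurableSpace Ω} {μ : Measure Ω}
    [IsProbabilityMeasure μ] (n : ℕ) (hn : 1 ≤ n)
    (G : Ω → EuclideanSpace ℝ (Fin n)) (hG : MemLp G 2 μ)
    (SigG : Matrix (Fin n) (Fin n) ℝ)
    (hSig : ∀ i j, SigG i j =
      ∫ ω, (G ω i - ∫ ω', G ω' i ∂μ) * (G ω j - ∫ ω', G ω' j ∂μ) ∂μ)
    (μ₀ : ℝ) (hμ₀ : 0 ≤ μ₀)
    (hquad : ∀ u : EuclideanSpace ℝ (Fin n), μ₀ * ‖u‖ ^ 2 ≤ ∑ i, ∑ j, u i * SigG i j * u j)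
    (v : EuclideanSpace ℝ (Fin n))
    (Yβ : Ω → ℝ) (hYβ : MemLp Yβ 2 μ)
    (γ : ℝ) (hγ : 0 ≤ γ)
    (Y : Ω → ℝ) (hY : ∀ ω, Y ω = Yβ ω + γ * ⟪G ω, v⟫)
    (hdom : Real.sqrt (∫ ω, (Yβ ω - ∫ ω', Yβ ω' ∂μ) ^ 2 ∂μ)
      ≤ γ * Real.sqrt μ₀ * ‖v‖) :
    ∀ c : ℝ,
      (γ * Real.sqrt μ₀ * ‖v‖
          - Real.sqrt (∫ ω, (Yβ ω - ∫ ω', Yβ ω' ∂μ) ^ 2 ∂μ)) ^ 2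
        ≤ ∫ ω, (c - Y ω) ^ 2 ∂μ := by
  intro c
  have hGint : Integrable G μ := hG.integrable one_le_two
  have hYβint : Integrable Yβ μ := hYβ.integrable one_le_two
  set mG : EuclideanSpace ℝ (Fin n) := ∫ ω, G ω ∂μ with hmGdef
  set mβ : ℝ := ∫ ω', Yβ ω' ∂μ with hmβdef
  have hGc : MemLp (fun ω => G ω - mG) 2 μ := hG.sub (memLp_const mG)
  have hZβ : MemLp (fun ω => Yβ ω - mβ) 2 μ := hYβ.sub (memLp_const mβ)
  -- inner products are in L²
  have hinner : MemLp (fun ω => ⟪G ω - mG, v⟫) 2 μ := by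
    have h := (innerSL ℝ v).comp_memLp' hGc
    refine h.ae_eq (Filter.Eventually.of_forall fun ω => ?_)
    simp [real_inner_comm, mul_comm]
  have hinner0 : MemLp (fun ω => ⟪G ω, v⟫) 2 μ := by
    have h := (innerSL ℝ v).comp_memLp' hG
    refine h.ae_eq (Filter.Eventually.of_forall fun ω => ?_)
    simp [real_inner_comm, mul_comm]
  have hW : MemLp (fun ω => γ * ⟪G ω - mG, v⟫) 2 μ := hinner.const_mul γ
  have hYme : MemLp Y 2 μ :=
    (hYβ.add (hinner0.const_mul γ)).ae_eq
      (Filter.Eventually.of_forall fun ω => (hY ω).symm)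
  have hYint : Integrable Y μ := hYme.integrable one_le_two
  set mY : ℝ := ∫ ω, Y ω ∂μ with hmYdef
  -- mean of Y
  have hmemG : ∫ ω, ⟪G ω, v⟫ ∂μ = ⟪mG, v⟫ := by
    have h := (innerSL ℝ v).integral_comp_comm hGint
    simp only [innerSL_apply_apply] at h
    calc ∫ ω, ⟪G ω, v⟫ ∂μ = ∫ ω, ⟪v, G ω⟫ ∂μ :=
          integral_congr_ae (Filter.Eventually.of_forall fun ω => real_inner_comm _ _)
      _ = ⟪v, mG⟫ := h
      _ = ⟪mG, v⟫ := real_inner_comm _ _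
  have hmY : mY = mβ + γ * ⟪mG, v⟫ := by
    rw [hmYdef]
    calc ∫ ω, Y ω ∂μ = ∫ ω, (Yβ ω + γ * ⟪G ω, v⟫) ∂μ :=
          integral_congr_ae (Filter.Eventually.of_forall fun ω => hY ω)
      _ = (∫ ω, Yβ ω ∂μ) + ∫ ω, γ * ⟪G ω, v⟫ ∂μ :=
          integral_add hYβint ((hinner0.integrable one_le_two).const_mul γ)
      _ = mβ + γ * ⟪mG, v⟫ := by rw [integral_const_mul, hmemG]
  have hdecomp : ∀ ω, Y ω - mY = (Yβ ω - mβ) + γ * ⟪G ω - mG, v⟫ := by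
    intro ω
    rw [hY ω, hmY, inner_sub_left]
    ring
  have hZY : MemLp (fun ω => Y ω - mY) 2 μ := hYme.sub (memLp_const mY)
  -- Step 1: variance minimizes mean square error
  have h1 : ∫ ω, (Y ω - mY) ^ 2 ∂μ ≤ ∫ ω, (c - Y ω) ^ 2 ∂μ := by
    have hint1 : Integrable (fun ω => (Y ω - mY) ^ 2) μ := hZY.integrable_sq
    have hintc : Integrable (fun ω => Y ω - mY) μ := hYint.sub (integrable_const mY)
    have hintlin : Integrable (fun ω => 2 * (c - mY) * (Y ω - mY)) μ := hintc.const_mul _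
    have hint2 : Integrable (fun ω => (c - mY) ^ 2 - 2 * (c - mY) * (Y ω - mY)) μ :=
      (integrable_const _).sub hintlin
    have hzero : ∫ ω, (Y ω - mY) ∂μ = 0 := by
      rw [integral_sub hYint (integrable_const mY), integral_const]
      simp [hmYdef]
    have hrest : ∫ ω, ((c - mY) ^ 2 - 2 * (c - mY) * (Y ω - mY)) ∂μ = (c - mY) ^ 2 := by
      rw [integral_sub (integrable_const _) hintlin, integral_const_mul, hzero,
        integral_const]
      simp
    calc ∫ ω, (Y ω - mY) ^ 2 ∂μ
        ≤ (∫ ω, (Y ω - mY) ^ 2 ∂μ) + (c - mY) ^ 2 := le_add_of_nonneg_right (sq_nonneg _)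
      _ = (∫ ω, (Y ω - mY) ^ 2 ∂μ)
          + ∫ ω, ((c - mY) ^ 2 - 2 * (c - mY) * (Y ω - mY)) ∂μ := by rw [hrest]
      _ = ∫ ω, ((Y ω - mY) ^ 2 + ((c - mY) ^ 2 - 2 * (c - mY) * (Y ω - mY))) ∂μ :=
          (integral_add hint1 hint2).symm
      _ = ∫ ω, (c - Y ω) ^ 2 ∂μ :=
          integral_congr_ae (Filter.Eventually.of_forall fun ω => by ring)
  -- L² norms
  set fβ : Lp ℝ 2 μ := hZβ.toLp _ with hfβ
  set fW : Lp ℝ 2 μ := hW.toLp _ with hfW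
  have hnβ : ‖fβ‖ ^ 2 = ∫ ω, (Yβ ω - mβ) ^ 2 ∂μ := by
    rw [norm_Lp_sq]
    refine integral_congr_ae ?_
    filter_upwards [hZβ.coeFn_toLp] with ω hω
    simp only [hfβ, hω]
  have hnW : ‖fW‖ ^ 2 = ∫ ω, (γ * ⟪G ω - mG, v⟫) ^ 2 ∂μ := by
    rw [norm_Lp_sq]
    refine integral_congr_ae ?_
    filter_upwards [hW.coeFn_toLp] with ω hω
    simp only [hfW, hω]
  have hnsum : ‖fβ + fW‖ ^ 2 = ∫ ω, (Y ω - mY) ^ 2 ∂μ := by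
    rw [norm_Lp_sq]
    refine integral_congr_ae ?_
    filter_upwards [Lp.coeFn_add fβ fW, hZβ.coeFn_toLp, hW.coeFn_toLp] with ω h1 h2 h3
    rw [h1, Pi.add_apply, h2, h3, hdecomp ω]
  -- Step 3: lower bound on ‖fW‖
  have hXi : ∀ i, MemLp (fun ω => G ω i - mG i) 2 μ := by
    intro i
    have h := (EuclideanSpace.proj (𝕜 := ℝ) i).comp_memLp' hGc
    refine h.ae_eq (Filter.Eventually.of_forall fun ω => ?_)
    simp [Function.comp]
  have hmean : ∀ i, mG i = ∫ ω, G ω i ∂μ := by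
    intro i
    exact ((EuclideanSpace.proj (𝕜 := ℝ) i).integral_comp_comm hGint).symm
  have hSig' : ∀ i j, SigG i j = ∫ ω, (G ω i - mG i) * (G ω j - mG j) ∂μ := by
    intro i j
    rw [hSig i j, hmean i, hmean j]
  have hQ : ∫ ω, ⟪G ω - mG, v⟫ ^ 2 ∂μ = ∑ i, ∑ j, v i * SigG i j * v j := by
    have expand : ∀ ω, ⟪G ω - mG, v⟫ ^ 2
        = ∑ i, ∑ j, v i * ((G ω i - mG i) * (G ω j - mG j)) * v j := by
      intro ω
      rw [PiLp.inner_apply]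
      simp only [RCLike.inner_apply, conj_trivial, PiLp.sub_apply]
      rw [sq, Finset.sum_mul_sum]
      exact Finset.sum_congr rfl fun i _ => Finset.sum_congr rfl fun j _ => by ring
    have hterm : ∀ i j, Integrable
        (fun ω => v i * ((G ω i - mG i) * (G ω j - mG j)) * v j) μ := fun i j =>
      ((mul_integrable' (hXi i) (hXi j)).const_mul (v i)).mul_const (v j)
    calc ∫ ω, ⟪G ω - mG, v⟫ ^ 2 ∂μ
        = ∫ ω, ∑ i, ∑ j, v i * ((G ω i - mG i) * (G ω j - mG j)) * v j ∂μ :=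
          integral_congr_ae (Filter.Eventually.of_forall expand)
      _ = ∑ i, ∫ ω, ∑ j, v i * ((G ω i - mG i) * (G ω j - mG j)) * v j ∂μ :=
          integral_finset_sum _ fun i _ => integrable_finset_sum _ fun j _ => hterm i j
      _ = ∑ i, ∑ j, ∫ ω, v i * ((G ω i - mG i) * (G ω j - mG j)) * v j ∂μ :=
          Finset.sum_congr rfl fun i _ => integral_finset_sum _ fun j _ => hterm i j
      _ = ∑ i, ∑ j, v i * SigG i j * v j := by
          refine Finset.sum_congr rfl fun i _ => Finset.sum_congr rfl fun j _ => ?_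
          rw [hSig' i j, integral_mul_const, integral_const_mul]
  have hQlb : μ₀ * ‖v‖ ^ 2 ≤ ∫ ω, ⟪G ω - mG, v⟫ ^ 2 ∂μ := by
    rw [hQ]; exact hquad v
  have hWlb : γ * Real.sqrt μ₀ * ‖v‖ ≤ ‖fW‖ := by
    have h2 : ∫ ω, (γ * ⟪G ω - mG, v⟫) ^ 2 ∂μ
        = γ ^ 2 * ∫ ω, ⟪G ω - mG, v⟫ ^ 2 ∂μ := by
      rw [← integral_const_mul]
      exact integral_congr_ae (Filter.Eventually.of_forall fun ω => by ring)
    have h3 : (γ * Real.sqrt μ₀ * ‖v‖) ^ 2 ≤ ‖fW‖ ^ 2 := by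
      rw [hnW, h2]
      have : (γ * Real.sqrt μ₀ * ‖v‖) ^ 2 = γ ^ 2 * (μ₀ * ‖v‖ ^ 2) := by
        rw [mul_pow, mul_pow, Real.sq_sqrt hμ₀]; ring
      rw [this]
      exact mul_le_mul_of_nonneg_left hQlb (sq_nonneg γ)
    have hnn : 0 ≤ γ * Real.sqrt μ₀ * ‖v‖ :=
      mul_nonneg (mul_nonneg hγ (Real.sqrt_nonneg _)) (norm_nonneg _)
    exact (pow_le_pow_iff_left₀ hnn (norm_nonneg _) two_ne_zero).mp h3
  -- triangle inequality
  have htri : ‖fW‖ - ‖fβ‖ ≤ ‖fβ + fW‖ := by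
    have : ‖fW‖ ≤ ‖fβ + fW‖ + ‖fβ‖ := by
      calc ‖fW‖ = ‖(fβ + fW) - fβ‖ := by rw [add_sub_cancel_left]
        _ ≤ ‖fβ + fW‖ + ‖fβ‖ := norm_sub_le _ _
    linarith
  -- assemble
  have haβ : ‖fβ‖ = Real.sqrt (∫ ω, (Yβ ω - mβ) ^ 2 ∂μ) := by
    rw [← hnβ, Real.sqrt_sq (norm_nonneg _)]
  have hfin : ‖fβ + fW‖ ^ 2 ≤ ∫ ω, (c - Y ω) ^ 2 ∂μ := hnsum.trans_le h1
  have hT : 0 ≤ γ * Real.sqrt μ₀ * ‖v‖ - Real.sqrt (∫ ω, (Yβ ω - mβ) ^ 2 ∂μ) := by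
    linarith [hdom]
  have hstep : γ * Real.sqrt μ₀ * ‖v‖ - Real.sqrt (∫ ω, (Yβ ω - mβ) ^ 2 ∂μ)
      ≤ ‖fβ + fW‖ := by
    rw [← haβ]
    linarith [hWlb, htri]
  calc (γ * Real.sqrt μ₀ * ‖v‖ - Real.sqrt (∫ ω, (Yβ ω - mβ) ^ 2 ∂μ)) ^ 2
      ≤ ‖fβ + fW‖ ^ 2 := by
        exact pow_le_pow_left₀ hT hstep 2
    _ ≤ ∫ ω, (c - Y ω) ^ 2 ∂μ := hfin
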